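/- With c_i^n the Taylor coefficients at 0 of (z + 1/(z+2))^n, for any 0 ≤ l ≤ n: c_{n−l}^n = 2^{−(2n−l)} Σ_{a=l}^n C(a, a−l) C(2n, n+a), and in particular c_{n−l}^n > 0. -/

import Mathlib

open Finset

private lemma sum_choose_shift (r : ℕ) (k : ℕ) :
    ∑ j ∈ range (k+1), ((r + j).choose j) = (r + 1 + k).choose k := by
  induction k with
  | zero => simp
  | succ k ih =>
    rw [Finset.sum_range_succ, ih]
    have h1 : r + 1 + (k+1) = (r + 1 + k) + 1 := by ring
    have h2 : r + (k+1) = r + 1 + k := by ring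
    rw [h1, h2, Nat.choose_succ_succ (r+1+k) k]

private lemma negbinom (r : ℕ) : ∀ u : ℝ, |u| < 1 →
    HasSum (fun k : ℕ => (-1:ℝ)^k * ((r + k).choose k : ℝ) * u^k) (1 / (1+u)^(r+1)) := by
  induction r with
  | zero =>
    intro u hu
    have h := hasSum_geometric_of_norm_lt_one (ξ := -u) (by simpa using hu)
    have : (1 - -u)⁻¹ = 1 / (1+u)^(0+1) := by rw [sub_neg_eq_add]; simp
    rw [this] at h
    refine h.congr_fun fun k => ?_
    rw [neg_pow u k]
    simp [mul_comm]
  | succ r ih =>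
    intro u hu
    have hne : (1:ℝ) + u ≠ 0 := by
      intro h; rw [abs_lt] at hu; nlinarith [hu.1]
    have ha := ih u hu
    have hb := hasSum_geometric_of_norm_lt_one (ξ := -u) (by simpa using hu)
    have hb' : HasSum (fun k : ℕ => (-u)^k) (1/(1+u)) := by
      rw [sub_neg_eq_add, ← one_div] at hb; exact hb
    -- norm summability
    have hna : Summable fun k : ℕ => ‖(-1:ℝ)^k * ((r + k).choose k : ℝ) * u^k‖ := by
      have := (ih (-|u|) (by simpa using hu)).summable
      refine this.congr fun k => ?_
      rw [neg_pow (|u|) k, show ((-1:ℝ)^k * ((r + k).choose k : ℝ) * ((-1)^k * |u|^k))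
        = ((-1:ℝ)^k * (-1)^k) * (((r + k).choose k : ℝ) * |u|^k) from by ring,
        ← pow_add, Even.neg_one_pow ⟨k, by ring⟩, one_mul]
      rw [norm_mul, norm_mul]
      simp [abs_pow]
    have hnb : Summable fun k : ℕ => ‖(-u)^k‖ := by
      simpa [abs_pow] using summable_geometric_of_lt_one (abs_nonneg u) hu
    have hcp := hasSum_sum_range_mul_of_summable_norm hna hnb
    rw [ha.tsum_eq, hb'.tsum_eq] at hcp
    have hval : (1 / (1+u)^(r+1)) * (1/(1+u)) = 1 / (1+u)^(r+1+1) := by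
      field_simp; ring
    rw [hval] at hcp
    refine hcp.congr_fun fun k => ?_
    have : ∀ j ∈ range (k+1),
        ((-1:ℝ)^j * ((r + j).choose j : ℝ) * u^j) * (-u)^(k-j)
          = ((r + j).choose j : ℝ) * ((-1:ℝ)^k * u^k) := by
      intro j hj
      rw [mem_range, Nat.lt_succ_iff] at hj
      rw [neg_pow u (k-j)]
      have : (-1:ℝ)^j * ((-1:ℝ)^(k-j)) = (-1:ℝ)^k := by
        rw [← pow_add]; congr 1; omega
      have hu' : u^j * u^(k-j) = u^k := by rw [← pow_add]; congr 1; omega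
      calc (-1:ℝ)^j * ((r + j).choose j : ℝ) * u^j * ((-1:ℝ)^(k-j) * u^(k-j))
          = ((r + j).choose j : ℝ) * (((-1:ℝ)^j * (-1:ℝ)^(k-j)) * (u^j * u^(k-j))) := by ring
        _ = _ := by rw [this, hu']
    rw [Finset.sum_congr rfl this, ← Finset.sum_mul, ← Nat.cast_sum, sum_choose_shift]
    ring

private def qq (n i k : ℕ) : ℝ :=
  if i ≤ n then ((n-i).choose k : ℝ) else (-1:ℝ)^k * ((i - n - 1 + k).choose k : ℝ)

private lemma hasSum_qq (n i : ℕ) (u : ℝ) (hu : |u| < 1) :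
    HasSum (fun k : ℕ => qq n i k * u ^ k) ((1+u) ^ ((n:ℤ) - i)) := by
  have hne : (1:ℝ) + u ≠ 0 := by
    intro h; rw [abs_lt] at hu; nlinarith [hu.1]
  by_cases hin : i ≤ n
  · have hz : ((1:ℝ)+u) ^ ((n:ℤ) - i) = (1+u)^(n-i : ℕ) := by
      rw [show (n:ℤ) - i = ((n - i : ℕ) : ℤ) by omega, zpow_natCast]
    rw [hz]
    have hfin : ∀ k ∉ range (n-i+1), qq n i k * u ^ k = 0 := by
      intro k hk
      rw [mem_range, Nat.lt_succ_iff, not_le] at hk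
      simp [qq, hin, Nat.choose_eq_zero_of_lt hk]
    have := hasSum_sum_of_ne_finset_zero (L := SummationFilter.unconditional ℕ) hfin
    convert this using 1
    rw [show (1:ℝ) + u = u + 1 from add_comm 1 u, add_pow]
    refine (Finset.sum_congr rfl fun k hk => ?_).symm
    simp [qq, hin]; ring
  · push_neg at hin
    have hz : ((1:ℝ)+u) ^ ((n:ℤ) - i) = 1 / (1+u)^((i - n - 1) + 1) := by
      rw [show (n:ℤ) - i = -(((i - n - 1 + 1 : ℕ)) : ℤ) by omega, zpow_neg, zpow_natCast, one_div]
    rw [hz]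
    have := negbinom (i - n - 1) u hu
    refine this.congr_fun fun k => ?_
    simp only [qq, if_neg (by omega : ¬ i ≤ n)]

private noncomputable def eI (n i m : ℕ) : ℝ :=
  if i ≤ m then (2:ℝ)⁻¹^(n+m) * ((2*n).choose i : ℝ) * qq n i (m-i) else 0

private lemma hasSum_eI (n i : ℕ) (x : ℝ) (hx : |x| < 2) :
    HasSum (fun m : ℕ => eI n i m * x ^ m)
      ((2:ℝ)⁻¹^n * ((2*n).choose i : ℝ) * (x/2)^i * (1+x/2) ^ ((n:ℤ) - i)) := by
  have hu : |x/2| < 1 := by rw [abs_div]; simp only [abs_two]; linarith [abs_nonneg x]; 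
  have h := (hasSum_qq n i (x/2) hu).mul_left ((2:ℝ)⁻¹^n * ((2*n).choose i : ℝ) * (x/2)^i)
  have heq : (fun k : ℕ => (2:ℝ)⁻¹^n * ((2*n).choose i : ℝ) * (x/2)^i * (qq n i k * (x/2)^k))
      = fun k : ℕ => eI n i (k + i) * x ^ (k + i) := by
    funext k
    simp only [eI, if_pos (Nat.le_add_left i k), Nat.add_sub_cancel]
    rw [div_pow, div_pow, pow_add, pow_add]
    field_simp
    simp only [one_div, inv_pow]; field_simp
    ring
  rw [heq] at h
  have h2 := (hasSum_nat_add_iff (f := fun m : ℕ => eI n i m * x ^ m) i).mp h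
  have hz : ∑ m ∈ range i, eI n i m * x ^ m = 0 := by
    refine Finset.sum_eq_zero fun m hm => ?_
    rw [mem_range] at hm
    simp [eI, Nat.not_le.mpr hm]
  rw [hz, add_zero] at h2
  exact h2

private lemma hasSum_main (n : ℕ) (x : ℝ) (hx : |x| < 2) :
    HasSum (fun m : ℕ => (∑ i ∈ range (2*n+1), eI n i m) * x ^ m) ((x + 1/(x+2))^n) := by
  have h2x : x + 2 ≠ 0 := by rw [abs_lt] at hx; nlinarith [hx.1]
  have hv : (1:ℝ) + x/2 ≠ 0 := by rw [abs_lt] at hx; intro h; nlinarith [hx.1]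
  have h : HasSum (fun m : ℕ => ∑ i ∈ range (2*n+1), eI n i m * x ^ m)
      (∑ i ∈ range (2*n+1),
        (2:ℝ)⁻¹^n * ((2*n).choose i : ℝ) * (x/2)^i * (1+x/2) ^ ((n:ℤ) - i)) :=
    hasSum_sum fun i _ => hasSum_eI n i x hx
  have hval : ∑ i ∈ range (2*n+1),
      (2:ℝ)⁻¹^n * ((2*n).choose i : ℝ) * (x/2)^i * (1+x/2) ^ ((n:ℤ) - i)
      = (x + 1/(x+2))^n := by
    have hterm : ∀ i ∈ range (2*n+1),
        (2:ℝ)⁻¹^n * ((2*n).choose i : ℝ) * (x/2)^i * (1+x/2) ^ ((n:ℤ) - i)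
        = ((x/2)^i * (1+x/2)^(2*n-i) * ((2*n).choose i : ℝ)) * ((2:ℝ)⁻¹^n / (1+x/2)^n) := by
      intro i hi
      rw [mem_range, Nat.lt_succ_iff] at hi
      rw [show (n:ℤ) - i = ((2*n - i : ℕ) : ℤ) - ((n:ℕ) : ℤ) by omega,
        zpow_sub₀ hv, zpow_natCast, zpow_natCast]
      ring
    rw [Finset.sum_congr rfl hterm, ← Finset.sum_mul, ← add_pow]
    have : x/2 + (1+x/2) = 1 + x := by ring
    rw [this]
    have hx2 : x + 1/(x+2) = (1+x)^2 / (2*(1+x/2)) := by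
      rw [show (2:ℝ)*(1+x/2) = x + 2 from by ring]
      field_simp
      ring
    rw [hx2, div_pow, ← pow_mul, mul_pow]
    rw [eq_div_iff (mul_ne_zero (pow_ne_zero _ two_ne_zero) (pow_ne_zero _ hv))]
    field_simp
    have : (2 + x) ≠ 0 := by rwa [add_comm]
    simp only [one_div, inv_pow]; field_simp
  rw [hval] at h
  refine h.congr_fun fun m => ?_
  rw [Finset.sum_mul]

private lemma coeff_unique (f : ℝ → ℝ) (c d : ℕ → ℝ)
    (hc : ∀ x : ℝ, |x| < 2 → HasSum (fun i : ℕ => c i * x ^ i) (f x))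
    (hd : ∀ x : ℝ, |x| < 2 → HasSum (fun i : ℕ => d i * x ^ i) (f x)) : c = d := by
  have key : ∀ e : ℕ → ℝ, (∀ x : ℝ, |x| < 2 → HasSum (fun i : ℕ => e i * x ^ i) (f x)) →
      HasFPowerSeriesAt f (FormalMultilinearSeries.ofScalars ℝ e) 0 := by
    intro e he
    refine ⟨1, ?_, one_pos, ?_⟩
    · have h1 := (he 1 (by norm_num)).summable.tendsto_atTop_zero
      simp only [one_pow, mul_one] at h1
      have h2 : (fun k : ℕ => ‖(FormalMultilinearSeries.ofScalars ℝ e) k‖ * ((1:NNReal) : ℝ)^k)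
          =O[Filter.atTop] (fun _ => (1:ℝ)) := by
        simp only [FormalMultilinearSeries.ofScalars_norm, NNReal.coe_one, one_pow, mul_one]
        exact h1.norm.isBigO_one ℝ
      simpa using (FormalMultilinearSeries.ofScalars ℝ e).le_radius_of_isBigO h2
    · intro y hy
      rw [mem_emetric_ball_zero_iff] at hy
      have hy1 : ‖y‖ < 1 := by simpa [enorm_eq_nnnorm, ← NNReal.coe_lt_coe] using hy
      have hy2 : |y| < 2 := by rw [← Real.norm_eq_abs]; linarith
      rw [zero_add]
      show HasSum (fun k => (FormalMultilinearSeries.ofScalars ℝ e) k (fun _ => y)) (f y)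
      simp only [FormalMultilinearSeries.ofScalars_apply_eq, smul_eq_mul]
      exact he y hy2
  have := (key c hc).eq_formalMultilinearSeries (key d hd)
  exact (FormalMultilinearSeries.ofScalars_series_eq_iff ℝ c d).mp this

theorem stmt_16 (n : ℕ) (c : ℕ → ℝ)
    (hc : ∀ x : ℝ, |x| < 2 → HasSum (fun i : ℕ => c i * x ^ i) ((x + 1 / (x + 2)) ^ n))
    (l : ℕ) (hl : l ≤ n) :
    c (n - l) =
        (2 : ℝ)⁻¹ ^ (2 * n - l) *
          ∑ a ∈ Finset.Icc l n, (a.choose (a - l) : ℝ) * ((2 * n).choose (n + a) : ℝ) ∧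
      0 < c (n - l) := by
  have hcoef : c = fun m => ∑ i ∈ range (2*n+1), eI n i m :=
    coeff_unique _ _ _ hc (fun x hx => hasSum_main n x hx)
  set m := n - l with hm
  have hmn : m ≤ n := Nat.sub_le n l
  have hsum : c m = (2:ℝ)⁻¹^(n+m) *
      ∑ i ∈ range (m+1), ((2*n).choose i : ℝ) * ((n-i).choose (m-i) : ℝ) := by
    simp only [hcoef]
    have hrestrict : ∑ i ∈ range (2*n+1), eI n i m = ∑ i ∈ range (m+1), eI n i m := by
      symm
      apply Finset.sum_subset (Finset.range_subset_range.mpr (by omega))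
      intro i _ hni
      rw [mem_range] at hni
      simp [eI, show ¬ i ≤ m from by omega]
    rw [hrestrict, Finset.mul_sum]
    refine Finset.sum_congr rfl fun i hi => ?_
    rw [mem_range, Nat.lt_succ_iff] at hi
    rw [eI, if_pos hi, qq, if_pos (le_trans hi hmn)]
    ring
  have hbij : ∑ i ∈ range (m+1), ((2*n).choose i : ℝ) * ((n-i).choose (m-i) : ℝ)
      = ∑ a ∈ Finset.Icc l n, (a.choose (a - l) : ℝ) * ((2*n).choose (n+a) : ℝ) := by
    refine Finset.sum_bij' (fun i _ => n - i) (fun a _ => n - a) ?_ ?_ ?_ ?_ ?_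
    · intro i hi; rw [mem_range, Nat.lt_succ_iff] at hi
      show n - i ∈ Finset.Icc l n; rw [Finset.mem_Icc]; omega
    · intro a ha; rw [Finset.mem_Icc] at ha
      show n - a ∈ range (m+1); rw [mem_range, Nat.lt_succ_iff]; omega
    · intro i hi; rw [mem_range, Nat.lt_succ_iff] at hi; show n - (n - i) = i; omega
    · intro a ha; rw [Finset.mem_Icc] at ha; show n - (n - a) = a; omega
    · intro i hi
      rw [mem_range, Nat.lt_succ_iff] at hi
      have e1 : (n - i) - l = m - i := by omega
      have e2 : n + (n - i) = 2*n - i := by omega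
      rw [e1, e2, Nat.choose_symm (by omega : i ≤ 2*n)]
      ring
  have hpos : 0 < ∑ a ∈ Finset.Icc l n, (a.choose (a - l) : ℝ) * ((2*n).choose (n+a) : ℝ) := by
    apply Finset.sum_pos'
    · intro a _; positivity
    · refine ⟨n, Finset.mem_Icc.mpr ⟨hl, le_refl n⟩, ?_⟩
      have h1 : 0 < (n.choose (n-l):ℝ) := by exact_mod_cast Nat.choose_pos (Nat.sub_le n l)
      have h2 : 0 < ((2*n).choose (n+n):ℝ) := by exact_mod_cast Nat.choose_pos (by omega)
      positivity
  have hfin : c m = (2:ℝ)⁻¹^(2*n - l) *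
      ∑ a ∈ Finset.Icc l n, (a.choose (a - l) : ℝ) * ((2*n).choose (n+a) : ℝ) := by
    rw [show 2*n - l = n + m from by omega, hsum, hbij]
  exact ⟨hfin, hfin ▸ mul_pos (by positivity) hpos⟩
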